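/- For every natural number n and every real x, K_n(x) = (1/2) · ( P_{n+1}'(x) P_n(x) − P_{n+1}(x) P_n'(x) ). -/

import Mathlib

open Polynomial Finset

/-- The degree-`n` Legendre polynomial, defined by the Rodrigues formula
`P_n(x) = (1/(2^n n!)) dⁿ/dxⁿ (x²−1)ⁿ`. -/
noncomputable def legendre (n : ℕ) : Polynomial ℝ :=
  Polynomial.C (1 / (2 ^ n * n.factorial : ℝ)) *
    Polynomial.derivative^[n] ((Polynomial.X ^ 2 - 1) ^ n)

/-- `P_n(x)`. -/
noncomputable def P (n : ℕ) (x : ℝ) : ℝ := (legendre n).eval x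

/-- `P_n'(x)`. -/
noncomputable def P' (n : ℕ) (x : ℝ) : ℝ := (Polynomial.derivative (legendre n)).eval x

/-- The normalized reciprocal Christoffel function
`K_n(x) = (1/(n+1)) Σ_{k=0}^{n} ((2k+1)/2) P_k(x)²`. -/
noncomputable def K (n : ℕ) (x : ℝ) : ℝ :=
  (1 / (n + 1)) * ∑ k ∈ Finset.range (n + 1), ((2 * k + 1) / 2 : ℝ) * (P k x) ^ 2

lemma iter_deriv_X_mul (m : ℕ) (f : Polynomial ℝ) :
    derivative^[m + 1] (X * f) =
      X * derivative^[m + 1] f + C ((m + 1 : ℕ) : ℝ) * derivative^[m] f := by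
  induction m generalizing f with
  | zero => simp [derivative_mul]; ring
  | succ m ih =>
    rw [Function.iterate_succ_apply' derivative (m+1), ih,
      Function.iterate_succ_apply' derivative (m+1),
      Function.iterate_succ_apply' derivative m]
    simp only [derivative_mul, derivative_add, derivative_X, C_mul, C_add, map_ofNat, C_1,
      Nat.cast_add, Nat.cast_one, derivative_C, derivative_one, derivative_natCast,
      map_natCast, ← Function.iterate_succ_apply, Function.iterate_succ_apply' derivative]
    ring

lemma iter_deriv_u_mul (m : ℕ) (f : Polynomial ℝ) :
    derivative^[m + 2] ((X ^ 2 - 1) * f) =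
      (X ^ 2 - 1) * derivative^[m + 2] f
        + C (2 * ((m : ℝ) + 2)) * X * derivative^[m + 1] f
        + C (((m : ℝ) + 2) * ((m : ℝ) + 1)) * derivative^[m] f := by
  induction m generalizing f with
  | zero =>
    show derivative^[2] _ = _
    rw [show (2:ℕ) = 1 + 1 from rfl]
    rw [Function.iterate_succ_apply' derivative 1, Function.iterate_one]
    simp only [derivative_mul, derivative_add, derivative_sub, derivative_one, derivative_X,
      derivative_pow, C_mul, C_add, map_ofNat, C_1, C_0, Nat.cast_ofNat, Nat.cast_zero,
      derivative_C, derivative_natCast, derivative_zero, map_natCast, Function.iterate_succ_apply',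
      Function.iterate_zero_apply, Function.iterate_one]
    ring
  | succ m ih =>
    rw [Function.iterate_succ_apply' derivative (m+2), ih,
      Function.iterate_succ_apply' derivative (m+2),
      Function.iterate_succ_apply' derivative (m+1)]
    simp only [derivative_mul, derivative_add, derivative_sub, derivative_one, derivative_X,
      derivative_pow, C_mul, C_add, map_ofNat, C_1, C_0, Nat.cast_add, Nat.cast_one,
      derivative_C, derivative_natCast, derivative_ofNat, map_natCast,
      ← Function.iterate_succ_apply, Function.iterate_succ_apply' derivative]
    ring

lemma deriv_u_pow (k : ℕ) :
    derivative ((X ^ 2 - 1 : Polynomial ℝ) ^ (k + 1)) =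
      C (2 * ((k : ℝ) + 1)) * (X * (X ^ 2 - 1) ^ k) := by
  rw [derivative_pow_succ]
  simp only [derivative_sub, derivative_one, derivative_X, derivative_pow, C_mul, C_add,
    map_ofNat, C_1, Nat.cast_ofNat, map_natCast, Nat.cast_add, Nat.cast_one]
  ring

lemma hc_succ (n : ℕ) : (1 / (2 ^ n * n.factorial : ℝ)) =
    2 * ((n : ℝ) + 1) * (1 / (2 ^ (n+1) * (n+1).factorial : ℝ)) := by
  have h2 : (2:ℝ)^n ≠ 0 := by positivity
  have h3 : (n.factorial : ℝ) ≠ 0 := by exact_mod_cast n.factorial_ne_zero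
  rw [Nat.factorial_succ]
  field_simp
  push_cast
  ring

lemma polyI (n : ℕ) :
    derivative (legendre (n + 1)) =
      X * derivative (legendre n) + C ((n : ℝ) + 1) * legendre n := by
  unfold legendre
  rw [derivative_C_mul, ← Function.iterate_succ_apply' derivative (n+1),
    Function.iterate_succ_apply derivative (n+1), deriv_u_pow n,
    iterate_derivative_C_mul, iter_deriv_X_mul n,
    derivative_C_mul, ← Function.iterate_succ_apply' derivative n, hc_succ n]
  simp only [Nat.succ_eq_add_one, C_mul, C_add, C_1, map_ofNat, map_natCast, Nat.cast_add,
    Nat.cast_one]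
  ring

lemma polyII (n : ℕ) :
    C ((n : ℝ) + 1) * legendre (n + 1) =
      C ((n : ℝ) + 1) * X * legendre n
        + (X ^ 2 - 1) * derivative (legendre n) := by
  cases n with
  | zero =>
    simp [legendre]
    rw [← C_1, ← C_add, ← mul_assoc, ← C_mul]
    norm_num
  | succ m =>
    set A := derivative^[m + 2] ((X ^ 2 - 1 : Polynomial ℝ) ^ (m + 2)) with hA
    set B := derivative^[m + 1] ((X ^ 2 - 1 : Polynomial ℝ) ^ (m + 1)) with hB
    set B' := derivative^[m + 2] ((X ^ 2 - 1 : Polynomial ℝ) ^ (m + 1)) with hB'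
    set R := derivative^[m] ((X ^ 2 - 1 : Polynomial ℝ) ^ (m + 1)) with hR
    have E1 : A = C (2 * ((m : ℝ) + 2)) * (X * B + C ((m : ℝ) + 1) * R) := by
      rw [hA, show m + 2 = (m + 1) + 1 from rfl, Function.iterate_succ_apply derivative (m+1),
        deriv_u_pow (m+1), iterate_derivative_C_mul, iter_deriv_X_mul m, hB, hR]
      push_cast
      ring
    have E2 : A = (X ^ 2 - 1) * B' + C (2 * ((m : ℝ) + 2)) * X * B
        + C (((m : ℝ) + 2) * ((m : ℝ) + 1)) * R := by
      rw [hA, show ((X ^ 2 - 1 : Polynomial ℝ) ^ (m + 2)) = (X ^ 2 - 1) * (X ^ 2 - 1) ^ (m+1) by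
        ring, iter_deriv_u_mul m, hB, hB', hR]
    have hRe : C (((m : ℝ) + 2) * ((m : ℝ) + 1)) * R = (X ^ 2 - 1) * B' := by
      linear_combination (norm := (simp only [C_mul, C_add, C_1, map_ofNat]; ring1)) E2 - E1
    have key : A = C (2 * ((m : ℝ) + 2)) * X * B + 2 * ((X ^ 2 - 1) * B') := by
      linear_combination (norm := (simp only [C_mul, C_add, C_1, map_ofNat]; ring1)) E1 + 2 * hRe
    push_cast
    show C ((m : ℝ) + 1 + 1) * legendre (m + 2) = _
    unfold legendre
    rw [← hA, ← hB, key, hc_succ (m+1), derivative_C_mul,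
      ← Function.iterate_succ_apply' derivative (m+1), ← hB']
    simp only [C_mul, C_add, C_1, map_ofNat, map_natCast, Nat.cast_add, Nat.cast_one,
      map_one, map_div₀]
    push_cast
    ring

-- pointwise identities
lemma hP'0 (x : ℝ) : P' 0 x = 0 := by
  simp [P', legendre]

lemma evalI (n : ℕ) (x : ℝ) :
    P' (n + 1) x = x * P' n x + ((n : ℝ) + 1) * P n x := by
  have := congrArg (eval x) (polyI n)
  simpa [P, P', eval_mul, eval_add] using this

lemma evalII (n : ℕ) (x : ℝ) :
    ((n : ℝ) + 1) * P (n + 1) x = ((n : ℝ) + 1) * x * P n x + (x ^ 2 - 1) * P' n x := by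
  have := congrArg (eval x) (polyII n)
  simpa [P, P', eval_mul, eval_add, eval_sub, eval_pow] using this

lemma sum_CD (n : ℕ) (x : ℝ) :
    ∑ k ∈ Finset.range (n + 1), (2 * (k : ℝ) + 1) * (P k x) ^ 2 =
      ((n : ℝ) + 1) * (P' (n + 1) x * P n x - P (n + 1) x * P' n x) := by
  induction n with
  | zero =>
    have h1 := evalI 0 x
    have h2 := evalII 0 x
    have h0 := hP'0 x
    rw [Finset.sum_range_one]
    push_cast at h1 h2 ⊢
    linear_combination (-(P 0 x)) * h1 + P' 0 x * h2 + (x^2 - 1) * P' 0 x * h0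
  | succ n ih =>
    rw [Finset.sum_range_succ, ih]
    have hIn := evalI n x
    have hIIn := evalII n x
    have hIn1 := evalI (n + 1) x
    have hIIn1 := evalII (n + 1) x
    push_cast at hIn hIIn hIn1 hIIn1 ⊢
    -- backward identities at level n
    have hb : P' n x = x * P' (n+1) x - ((n:ℝ)+1) * P (n+1) x := by
      linear_combination hIIn - x * hIn
    have ha : ((n:ℝ)+1) * P n x = ((n:ℝ)+1) * x * P (n+1) x - (x^2-1) * P' (n+1) x := by
      linear_combination (x^2-1) * hIn - x * hIIn
    have hBwd : ((n:ℝ)+1) * (P' (n+1) x * P n x - P (n+1) x * P' n x)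
        = ((n:ℝ)+1)^2 * (P (n+1) x)^2 - (x^2-1) * (P' (n+1) x)^2 := by
      linear_combination P' (n+1) x * ha - ((n:ℝ)+1) * P (n+1) x * hb
    have hFwd : ((n:ℝ)+1+1) * (P' (n+1+1) x * P (n+1) x - P (n+1+1) x * P' (n+1) x)
        = ((n:ℝ)+2)^2 * (P (n+1) x)^2 - (x^2-1) * (P' (n+1) x)^2 := by
      linear_combination ((n:ℝ)+2) * P (n+1) x * hIn1 - P' (n+1) x * hIIn1
    linear_combination hBwd - hFwd

/-- Christoffel–Darboux: `K_n(x) = (1/2) (P_{n+1}'(x) P_n(x) − P_{n+1}(x) P_n'(x))`. -/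
theorem christoffel_darboux (n : ℕ) (x : ℝ) :
    K n x = (1 / 2) * (P' (n + 1) x * P n x - P (n + 1) x * P' n x) := by
  have h := sum_CD n x
  have hn : ((n : ℝ) + 1) ≠ 0 := by positivity
  unfold K
  have hsum : ∑ k ∈ Finset.range (n + 1), ((2 * k + 1) / 2 : ℝ) * (P k x) ^ 2
      = (1/2) * ∑ k ∈ Finset.range (n + 1), (2 * (k : ℝ) + 1) * (P k x) ^ 2 := by
    rw [Finset.mul_sum]
    exact Finset.sum_congr rfl fun k _ => by ring
  rw [hsum, h]
  field_simp
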